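/- Let G be a nontrivial finite abelian group with primary decomposition G ≅ ∏_{i=1}^n ZMod (p_i^{e_i}) where the p_i are primes and e_i ≥ 1. Then μ(G) = ∑_{i=1}^n p_i^{e_i}. -/

import Mathlib

noncomputable def minFaithfulDegree (G : Type*) [Group G] : ℕ :=
  sInf {n : ℕ | ∃ f : G →* Equiv.Perm (Fin n), Function.Injective f}

open Finset

section Machinery
variable {A B : Type*} [CommGroup A] [CommGroup B]

/-- The subgroup of elements killed by `q` that are `q^(k-1)`-th powers. -/
def dSub (q k : ℕ) (A : Type*) [CommGroup A] : Subgroup A :=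
  (powMonoidHom q : A →* A).ker ⊓ (powMonoidHom (q^(k-1)) : A →* A).range

lemma mem_dSub {q k : ℕ} {a : A} :
    a ∈ dSub q k A ↔ a ^ q = 1 ∧ ∃ b, b ^ q ^ (k-1) = a := Iff.rfl

noncomputable def dInv (q k : ℕ) (A : Type*) [CommGroup A] : ℕ :=
  (Nat.card (dSub q k A)).factorization q

lemma dInv_mono (q k : ℕ) [Finite A] [Finite B] (φ : A →* B) (hφ : Function.Injective φ) :
    dInv q k A ≤ dInv q k B := by
  have hmap : (dSub q k A).map φ ≤ dSub q k B := by
    rintro b ⟨a, ha, rfl⟩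
    simp only [SetLike.mem_coe, mem_dSub] at ha
    rw [mem_dSub]
    obtain ⟨ha1, c, hc⟩ := ha
    exact ⟨by rw [← map_pow, ha1, map_one], ⟨φ c, by rw [← map_pow, hc]⟩⟩
  have h1 : Nat.card (dSub q k A) = Nat.card ((dSub q k A).map φ) :=
    Nat.card_congr ((dSub q k A).equivMapOfInjective φ hφ).toEquiv
  have hdvd : Nat.card (dSub q k A) ∣ Nat.card (dSub q k B) := by
    rw [h1]; exact Subgroup.card_dvd_of_le hmap
  have h2 := (Nat.factorization_le_iff_dvd Nat.card_pos.ne' Nat.card_pos.ne').2 hdvd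
  exact h2 q

lemma dSub_pi {ι : Type*} (A : ι → Type*) [∀ i, CommGroup (A i)] (q k : ℕ) :
    dSub q k (∀ i, A i) = Subgroup.pi Set.univ (fun i => dSub q k (A i)) := by
  ext x
  simp only [mem_dSub, Subgroup.mem_pi, Set.mem_univ, forall_true_left]
  constructor
  · rintro ⟨h1, b, hb⟩ i
    exact ⟨congrFun h1 i, ⟨b i, congrFun hb i⟩⟩
  · intro h
    refine ⟨funext fun i => (h i).1, ⟨fun i => (h i).2.choose, funext fun i => (h i).2.choose_spec⟩⟩

/-- pi of subgroups is equiv to product of the subgroups -/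
def Subgroup.piEquiv' {ι : Type*} {A : ι → Type*} [∀ i, CommGroup (A i)]
    (S : ∀ i, Subgroup (A i)) : (Subgroup.pi Set.univ S) ≃ ∀ i, S i where
  toFun x i := ⟨x.1 i, x.2 i (Set.mem_univ i)⟩
  invFun x := ⟨fun i => (x i).1, fun i _ => (x i).2⟩
  left_inv x := rfl
  right_inv x := rfl

lemma dInv_pi {ι : Type*} [Fintype ι] (A : ι → Type*) [∀ i, CommGroup (A i)]
    [∀ i, Finite (A i)] (q k : ℕ) :
    dInv q k (∀ i, A i) = ∑ i, dInv q k (A i) := by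
  unfold dInv
  rw [dSub_pi, Nat.card_congr (Subgroup.piEquiv' _), Nat.card_pi,
    Nat.factorization_prod (fun i _ => Nat.card_pos.ne')]
  simp [Finsupp.finset_sum_apply]

lemma mem_dSub_mult {M : Type*} [AddCommGroup M] {q k : ℕ} {a : Multiplicative M} :
    a ∈ dSub q k (Multiplicative M) ↔
      q • Multiplicative.toAdd a = 0 ∧ ∃ y : M, q^(k-1) • y = Multiplicative.toAdd a := by
  rw [mem_dSub]
  constructor
  · rintro ⟨h1, b, hb⟩
    exact ⟨congrArg Multiplicative.toAdd h1, Multiplicative.toAdd b, congrArg Multiplicative.toAdd hb⟩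
  · rintro ⟨h1, y, hy⟩
    exact ⟨congrArg Multiplicative.ofAdd h1, Multiplicative.ofAdd y, congrArg Multiplicative.ofAdd hy⟩

lemma dSub_eq_bot_card {A : Type*} [CommGroup A] {q k : ℕ} (h : dSub q k A = ⊥) :
    dInv q k A = 0 := by
  unfold dInv
  rw [h]
  simp

lemma p_smul_zmod {p e : ℕ} (hp : p.Prime) (he : 1 ≤ e) (a : ZMod (p^e))
    (h : p • a = 0) : ∃ t : ℕ, a = ((p^(e-1) : ℕ) : ZMod (p^e)) * t := by
  haveI : NeZero (p^e) := ⟨pow_ne_zero _ hp.pos.ne'⟩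
  rw [nsmul_eq_mul] at h
  have hval : ((p * a.val : ℕ) : ZMod (p^e)) = 0 := by
    push_cast [ZMod.natCast_val, ZMod.cast_id]
    rw [h]
  rw [ZMod.natCast_eq_zero_iff] at hval
  have hpow : p^e = p * p^(e-1) := by
    conv_lhs => rw [show e = 1 + (e-1) by omega]
    rw [pow_add, pow_one]
  have hval2 : p * p^(e-1) ∣ p * a.val := dvd_trans (dvd_of_eq hpow.symm) hval
  have hdvd : p^(e-1) ∣ a.val := (mul_dvd_mul_iff_left (a := p) hp.pos.ne').1 hval2
  obtain ⟨t, ht⟩ := hdvd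
  refine ⟨t, ?_⟩
  have h2 : ((a.val : ℕ) : ZMod (p^e)) = a := ZMod.natCast_rightInverse a
  rw [← h2, ht]
  push_cast
  ring

lemma dInv_cyclic (p e q k : ℕ) (hp : p.Prime) (he : 1 ≤ e) (hq : q.Prime) (hk : 1 ≤ k) :
    dInv q k (Multiplicative (ZMod (p^e))) = if q = p ∧ k ≤ e then 1 else 0 := by
  haveI : NeZero (p^e) := ⟨pow_ne_zero _ hp.pos.ne'⟩
  by_cases hqp : q = p
  · subst hqp
    by_cases hke : k ≤ e
    · -- main case : dSub = zmultiples of q^(e-1)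
      rw [if_pos ⟨rfl, hke⟩]
      set x₀ : ZMod (q^e) := ((q^(e-1) : ℕ) : ZMod (q^e)) with hx₀
      have hq0 : q • x₀ = 0 := by
        rw [nsmul_eq_mul, hx₀]
        have : ((q * q^(e-1) : ℕ) : ZMod (q^e)) = 0 := by
          rw [show q * q^(e-1) = q^e by
            conv_rhs => rw [show e = 1 + (e-1) by omega]
            rw [pow_add, pow_one]]
          exact ZMod.natCast_self _
        push_cast at this ⊢
        rw [← this]
      have hset : ∀ a : Multiplicative (ZMod (q^e)),
          a ∈ dSub q k (Multiplicative (ZMod (q^e))) ↔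
            Multiplicative.toAdd a ∈ AddSubgroup.zmultiples x₀ := by
        intro a
        rw [mem_dSub_mult, AddSubgroup.mem_zmultiples_iff]
        constructor
        · rintro ⟨h1, -⟩
          obtain ⟨t, ht⟩ := p_smul_zmod hq he _ h1
          exact ⟨t, by rw [ht, hx₀, zsmul_eq_mul]; push_cast; ring⟩
        · rintro ⟨m, hm⟩
          constructor
          · rw [← hm, smul_comm, hq0, smul_zero]
          · refine ⟨m • ((q^(e-k) : ℕ) : ZMod (q^e)), ?_⟩
            rw [smul_comm, ← hm]
            congr 1
            rw [nsmul_eq_mul, hx₀]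
            push_cast
            rw [← pow_add]
            congr 1
            omega
      have hcard : Nat.card (dSub q k (Multiplicative (ZMod (q^e)))) =
          Nat.card (AddSubgroup.zmultiples x₀) := by
        refine Nat.card_congr ⟨fun a => ⟨Multiplicative.toAdd a.1, (hset _).1 a.2⟩,
          fun y => ⟨Multiplicative.ofAdd y.1, (hset _).2 y.2⟩, fun a => rfl, fun y => rfl⟩
      unfold dInv
      rw [hcard, Nat.card_zmultiples, hx₀, ZMod.addOrderOf_coe _ (pow_ne_zero _ hp.pos.ne')]
      have hgcd : (q^e).gcd (q^(e-1)) = q^(e-1) :=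
        Nat.gcd_eq_right (pow_dvd_pow q (by omega))
      rw [hgcd, Nat.pow_div (by omega) hp.pos, show e - (e-1) = 1 by omega, pow_one]
      simp [hp.factorization]
    · -- k > e : dSub = ⊥
      rw [if_neg (by tauto)]
      refine dSub_eq_bot_card ?_
      rw [eq_bot_iff]
      intro a ha
      rw [mem_dSub_mult] at ha
      obtain ⟨-, y, hy⟩ := ha
      have hzero : (q^(k-1) : ZMod (q^e)) = 0 := by
        have : ((q^(k-1) : ℕ) : ZMod (q^e)) = 0 := by
          rw [ZMod.natCast_eq_zero_iff]
          exact pow_dvd_pow q (by omega)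
        push_cast at this
        exact this
      rw [nsmul_eq_mul] at hy
      push_cast at hy
      rw [hzero, zero_mul] at hy
      have : Multiplicative.toAdd a = 0 := hy.symm
      simpa [Subgroup.mem_bot] using congrArg Multiplicative.ofAdd this
  · -- q ≠ p : q is a unit, dSub = ⊥
    rw [if_neg (by tauto)]
    refine dSub_eq_bot_card ?_
    rw [eq_bot_iff]
    intro a ha
    rw [mem_dSub_mult] at ha
    obtain ⟨h1, -⟩ := ha
    rw [nsmul_eq_mul] at h1
    have hu : IsUnit (q : ZMod (p^e)) := by
      rw [ZMod.isUnit_iff_coprime]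
      exact Nat.Coprime.pow_right _ ((Nat.coprime_primes hq hp).2 hqp)
    have : Multiplicative.toAdd a = 0 := by
      have := hu.mul_right_eq_zero.1 h1
      exact this
    simpa [Subgroup.mem_bot] using congrArg Multiplicative.ofAdd this

lemma telescope (p : ℕ) (hp : 1 ≤ p) : ∀ e : ℕ, 1 ≤ e →
    ∑ k ∈ Icc 1 e, (p^k - p^(k-1) + if k = 1 then 1 else 0) = p^e := by
  intro e
  induction e with
  | zero => omega
  | succ m ih =>
    intro _
    by_cases hm : 1 ≤ m
    · rw [show m + 1 = m + 1 by rfl, Finset.sum_Icc_succ_top (by omega), ih hm]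
      have h1 : p^m ≤ p^(m+1) := Nat.pow_le_pow_right (by omega) (by omega)
      have h2 : (if m + 1 = 1 then 1 else 0) = 0 := by simp; omega
      rw [h2]
      simp
      omega
    · have hm0 : m = 0 := by omega
      subst hm0
      simp
      omega

lemma sum_pow_eq {ι : Type*} [Fintype ι] (p e : ι → ℕ) (hp : ∀ i, (p i).Prime)
    (he : ∀ i, 1 ≤ e i) (P : Finset ℕ) (hP : ∀ i, p i ∈ P) (E : ℕ) (hE : ∀ i, e i ≤ E) :
    ∑ i, p i ^ e i = ∑ q ∈ P, ∑ k ∈ Icc 1 E,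
      (∑ i, if p i = q ∧ k ≤ e i then 1 else 0) *
        (q^k - q^(k-1) + if k = 1 then 1 else 0) := by
  have step1 : ∀ q ∈ P, ∀ k ∈ Icc 1 E,
      (∑ i, if p i = q ∧ k ≤ e i then 1 else 0) *
        (q^k - q^(k-1) + if k = 1 then 1 else 0)
      = ∑ i, (if p i = q ∧ k ≤ e i then (q^k - q^(k-1) + if k = 1 then 1 else 0) else 0) := by
    intro q _ k _
    rw [Finset.sum_mul]
    congr 1
    ext i
    rw [ite_mul, one_mul, zero_mul]
  rw [Finset.sum_congr rfl (fun q hq => Finset.sum_congr rfl (step1 q hq))]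
  have step2 : ∀ q ∈ P, (∑ k ∈ Icc 1 E, ∑ i : ι,
      (if p i = q ∧ k ≤ e i then (q^k - q^(k-1) + if k = 1 then 1 else 0) else 0))
      = ∑ i : ι, ∑ k ∈ Icc 1 E,
      (if p i = q ∧ k ≤ e i then (q^k - q^(k-1) + if k = 1 then 1 else 0) else 0) := by
    intro q _
    exact Finset.sum_comm
  rw [Finset.sum_congr rfl step2, Finset.sum_comm]
  refine (Finset.sum_congr rfl ?_).symm
  intro i _
  rw [Finset.sum_eq_single_of_mem (p i) (hP i) ?side]
  case side =>
    intro q _ hq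
    refine Finset.sum_eq_zero fun k _ => if_neg ?_
    rintro ⟨h, -⟩
    exact hq h.symm
  have : ∀ k ∈ Icc 1 E, (if p i = p i ∧ k ≤ e i then (p i^k - p i^(k-1) + if k = 1 then 1 else 0) else 0)
      = (if k ≤ e i then (p i^k - p i^(k-1) + if k = 1 then 1 else 0) else 0) := by
    intro k _
    simp
  rw [Finset.sum_congr rfl this, ← Finset.sum_filter,
    show (Icc 1 E).filter (· ≤ e i) = Icc 1 (e i) by
      ext a; simp only [Finset.mem_filter, Finset.mem_Icc]; constructor
      · rintro ⟨⟨h1, -⟩, h2⟩; exact ⟨h1, h2⟩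
      · rintro ⟨h1, h2⟩; exact ⟨⟨h1, le_trans h2 (hE i)⟩, h2⟩]
  exact telescope (p i) (hp i).one_lt.le (e i) (he i)


theorem key_ineq {ι κ : Type*} [Fintype ι] [Fintype κ]
    (p e : ι → ℕ) (q c : κ → ℕ)
    (hp : ∀ i, (p i).Prime) (he : ∀ i, 1 ≤ e i)
    (hq : ∀ j, (q j).Prime) (hc : ∀ j, 1 ≤ c j)
    (φ : (∀ i, Multiplicative (ZMod (p i ^ e i))) →* ∀ j, Multiplicative (ZMod (q j ^ c j)))
    (hφ : Function.Injective φ) :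
    ∑ i, p i ^ e i ≤ ∑ j, q j ^ c j := by
  haveI : ∀ i, NeZero (p i ^ e i) := fun i => ⟨pow_ne_zero _ (hp i).pos.ne'⟩
  haveI : ∀ j, NeZero (q j ^ c j) := fun j => ⟨pow_ne_zero _ (hq j).pos.ne'⟩
  set P : Finset ℕ := (Finset.univ.image p) ∪ (Finset.univ.image q) with hPdef
  set E : ℕ := (Finset.univ.sup e) ⊔ (Finset.univ.sup c) with hEdef
  have hPp : ∀ i, p i ∈ P := fun i => mem_union_left _ (mem_image_of_mem p (mem_univ i))
  have hPq : ∀ j, q j ∈ P := fun j => mem_union_right _ (mem_image_of_mem q (mem_univ j))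
  have hprime : ∀ r ∈ P, r.Prime := by
    intro r hr
    rcases Finset.mem_union.1 hr with h | h <;> obtain ⟨i, -, rfl⟩ := Finset.mem_image.1 h
    · exact hp i
    · exact hq i
  have hEe : ∀ i, e i ≤ E := fun i => le_trans (Finset.le_sup (mem_univ i)) le_sup_left
  have hEc : ∀ j, c j ≤ E := fun j => le_trans (Finset.le_sup (mem_univ j)) le_sup_right
  rw [sum_pow_eq p e hp he P hPp E hEe, sum_pow_eq q c hq hc P hPq E hEc]
  refine Finset.sum_le_sum fun r hr => Finset.sum_le_sum fun k hk => Nat.mul_le_mul_right _ ?_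
  have hk1 : 1 ≤ k := (Finset.mem_Icc.1 hk).1
  have hA : (∑ i, if p i = r ∧ k ≤ e i then 1 else 0)
      = dInv r k (∀ i, Multiplicative (ZMod (p i ^ e i))) := by
    rw [dInv_pi]
    refine Finset.sum_congr rfl fun i _ => ?_
    rw [dInv_cyclic (p i) (e i) r k (hp i) (he i) (hprime r hr) hk1]
    rcases eq_or_ne (p i) r with h | h
    · simp [h]
    · simp [h, h.symm]
  have hB : (∑ j, if q j = r ∧ k ≤ c j then 1 else 0)
      = dInv r k (∀ j, Multiplicative (ZMod (q j ^ c j))) := by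
    rw [dInv_pi]
    refine Finset.sum_congr rfl fun j _ => ?_
    rw [dInv_cyclic (q j) (c j) r k (hq j) (hc j) (hprime r hr) hk1]
    rcases eq_or_ne (q j) r with h | h
    · simp [h]
    · simp [h, h.symm]
  rw [hA, hB]
  exact dInv_mono r k φ hφ

def MulEquiv.piCurry' {ι : Type*} {κ : ι → Type*} (B : ∀ i, κ i → Type*)
    [∀ i j, Mul (B i j)] :
    (∀ x : Σ i, κ i, B x.1 x.2) ≃* ∀ i, ∀ j, B i j where
  toFun := Sigma.curry
  invFun := Sigma.uncurry
  left_inv _ := rfl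
  right_inv _ := rfl
  map_mul' _ _ := rfl

/-- decompose `ZMod n` into its primary parts -/
noncomputable def zmodPrimary (n : ℕ) (hn : n ≠ 0) :
    ZMod n ≃+ ∀ r : n.primeFactors, ZMod ((r : ℕ) ^ n.factorization (r : ℕ)) := by
  have hco : Pairwise (Function.onFun Nat.Coprime fun r : n.primeFactors =>
      (r : ℕ) ^ n.factorization (r : ℕ)) := by
    intro a b hab
    have ha := Nat.prime_of_mem_primeFactors a.2
    have hb := Nat.prime_of_mem_primeFactors b.2
    have : (a : ℕ) ≠ (b : ℕ) := fun h => hab (Subtype.ext h)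
    exact Nat.Coprime.pow _ _ ((Nat.coprime_primes ha hb).2 this)
  have hprod : (∏ r : n.primeFactors, (r : ℕ) ^ n.factorization (r : ℕ)) = n := by
    exact (Finset.prod_coe_sort _ _).trans (Nat.factorization_prod_pow_eq_self hn)
  exact ((ZMod.ringEquivCongr hprod.symm).trans (ZMod.prodEquivPi _ hco)).toAddEquiv

lemma exists_primary (Q : Type*) [CommGroup Q] [Finite Q] :
    ∃ (ι : Type) (_ : Fintype ι) (q : ι → ℕ) (c : ι → ℕ),
      (∀ j, (q j).Prime) ∧ (∀ j, 1 ≤ c j) ∧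
      Nonempty (Q ≃* ∀ j, Multiplicative (ZMod (q j ^ c j))) := by
  obtain ⟨ι, hι, m, h1, ⟨eqv⟩⟩ := CommGroup.equiv_prod_multiplicative_zmod_of_finite Q
  haveI := hι
  refine ⟨Σ i : ι, ↥(m i).primeFactors, inferInstance,
    fun x => (x.2 : ℕ), fun x => (m x.1).factorization (x.2 : ℕ), ?_, ?_, ?_⟩
  · exact fun x => Nat.prime_of_mem_primeFactors x.2.2
  · intro x
    have := Nat.Prime.factorization_pos_of_dvd (Nat.prime_of_mem_primeFactors x.2.2)
      (by have := h1 x.1; omega) (Nat.dvd_of_mem_primeFactors x.2.2)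
    exact this
  · refine ⟨eqv.trans ?_⟩
    refine (MulEquiv.piCongrRight fun i => ?_).trans (MulEquiv.piCurry' (fun (i : ι) (r : ↥(m i).primeFactors) => Multiplicative (ZMod ((r:ℕ) ^ (m i).factorization (r:ℕ))))).symm
    exact (AddEquiv.toMultiplicative (zmodPrimary (m i) (by have := h1 i; omega))).trans
      (MulEquiv.piMultiplicative _)

def transHom {ι : Type*} (A : ι → Type*) [∀ i, AddCommGroup (A i)] :
    (∀ i, Multiplicative (A i)) →* Equiv.Perm (Σ i, A i) where
  toFun g := Equiv.sigmaCongrRight (fun i => Equiv.addRight (Multiplicative.toAdd (g i)))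
  map_one' := by
    refine Equiv.ext ?_
    rintro ⟨i, x⟩
    simp
  map_mul' g h := by
    refine Equiv.ext ?_
    rintro ⟨i, x⟩
    simp only [Equiv.sigmaCongrRight_apply, Equiv.Perm.mul_apply, Equiv.coe_addRight, Pi.mul_apply, toAdd_mul]
    refine congrArg (Sigma.mk i) ?_
    abel

lemma transHom_injective {ι : Type*} (A : ι → Type*) [∀ i, AddCommGroup (A i)] :
    Function.Injective (transHom A) := by
  intro g h hgh
  funext i
  have := congrArg (fun (σ : Equiv.Perm (Σ i, A i)) => σ ⟨i, 0⟩) hgh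
  simp only [transHom, MonoidHom.coe_mk, OneHom.coe_mk, Equiv.sigmaCongrRight_apply,
    Equiv.coe_addRight] at this
  have h2 : Multiplicative.toAdd (g i) = Multiplicative.toAdd (h i) := by
    have := (Sigma.mk.inj_iff.1 this).2
    simpa using this
  exact Multiplicative.toAdd.injective h2

lemma nat_card_sigma {ι : Type*} [Fintype ι] (B : ι → Type*) [∀ i, Finite (B i)] :
    Nat.card (Σ i, B i) = ∑ i, Nat.card (B i) := by
  haveI := fun i => Fintype.ofFinite (B i)
  simp [Nat.card_eq_fintype_card, Fintype.card_sigma]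

lemma sum_le_prod' {ι : Type*} (s : Finset ι) (f : ι → ℕ) (hf : ∀ i ∈ s, 2 ≤ f i) :
    ∑ i ∈ s, f i ≤ ∏ i ∈ s, f i := by
  induction s using Finset.cons_induction with
  | empty => simp
  | cons a s ha ih =>
    rw [Finset.sum_cons, Finset.prod_cons]
    have h2 : 2 ≤ f a := hf a (Finset.mem_cons_self a s)
    have hs : ∑ i ∈ s, f i ≤ ∏ i ∈ s, f i := ih (fun i hi => hf i (Finset.mem_cons_of_mem hi))
    rcases s.eq_empty_or_nonempty with rfl | hne
    · simp
    · have hp2 : 2 ≤ ∏ i ∈ s, f i := by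
        obtain ⟨b, hb⟩ := hne
        calc 2 ≤ f b := hf b (Finset.mem_cons_of_mem hb)
        _ ≤ ∏ i ∈ s, f i := Finset.single_le_prod' (fun i hi => le_trans (by norm_num) (hf i (Finset.mem_cons_of_mem hi))) hb
      nlinarith

end Machinery

theorem lower_bound {G : Type*} [CommGroup G] [Finite G]
    {n : ℕ} (p e : Fin n → ℕ) (hp : ∀ i, (p i).Prime) (he : ∀ i, 1 ≤ e i)
    (iso : G ≃* ∀ i : Fin n, Multiplicative (ZMod (p i ^ e i)))
    (m : ℕ) (f : G →* Equiv.Perm (Fin m)) (hf : Function.Injective f) :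
    ∑ i, p i ^ e i ≤ m := by
  classical
  letI act : MulAction G (Fin m) := MulAction.compHom _ f
  set Ω := Quotient (MulAction.orbitRel G (Fin m)) with hΩ
  haveI : Finite Ω := Quotient.finite _
  haveI : Fintype Ω := Fintype.ofFinite _
  set K : Ω → Subgroup G := fun ω => MulAction.stabilizer G ω.out with hK
  have hm : m = ∑ ω : Ω, Nat.card (G ⧸ K ω) := by
    have h1 : Nat.card (Fin m) = m := by simp
    rw [← h1, Nat.card_congr (MulAction.selfEquivSigmaOrbitsQuotientStabilizer G (Fin m)),
      nat_card_sigma]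
  set ψ : G →* ∀ ω : Ω, G ⧸ K ω := Pi.monoidHom (fun ω => QuotientGroup.mk' (K ω)) with hψ
  have hψinj : Function.Injective ψ := by
    rw [injective_iff_map_eq_one]
    intro g hg
    have hstab : ∀ ω : Ω, g ∈ K ω := by
      intro ω
      have h2 := congrFun hg ω
      exact (QuotientGroup.eq_one_iff g).1 h2
    have hfix : ∀ x : Fin m, g • x = x := by
      intro x
      set ω₀ : Ω := Quotient.mk (MulAction.orbitRel G (Fin m)) x with hω₀
      have hrel := Quotient.mk_out (s := MulAction.orbitRel G (Fin m)) x
      obtain ⟨h, hh⟩ := MulAction.mem_orbit_iff.1 (MulAction.orbitRel_apply.1 hrel)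
      have hgout : g • (ω₀.out) = ω₀.out := hstab ω₀
      calc g • x = g • (h⁻¹ • (ω₀.out)) := by rw [← hh, inv_smul_smul]
      _ = (g * h⁻¹) • (ω₀.out) := by rw [mul_smul]
      _ = (h⁻¹ * g) • (ω₀.out) := by rw [mul_comm]
      _ = h⁻¹ • (g • (ω₀.out)) := by rw [mul_smul]
      _ = h⁻¹ • (ω₀.out) := by rw [hgout]
      _ = x := by rw [← hh, inv_smul_smul]
    have hfg : f g = 1 := Equiv.ext fun x => hfix x
    exact hf (by rw [hfg, map_one])
  have hdec := fun ω : Ω => exists_primary (G ⧸ K ω)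
  choose ι hfin q c hq hc hequiv using hdec
  haveI := hfin
  let E2 := MulEquiv.piCongrRight (fun ω : Ω => (hequiv ω).some)
  let E3 := (MulEquiv.piCurry' (fun (ω : Ω) (j : ι ω) =>
    Multiplicative (ZMod (q ω j ^ c ω j)))).symm
  let φ : (∀ i : Fin n, Multiplicative (ZMod (p i ^ e i))) →*
      ∀ x : Σ ω : Ω, ι ω, Multiplicative (ZMod (q x.1 x.2 ^ c x.1 x.2)) :=
    E3.toMonoidHom.comp (E2.toMonoidHom.comp (ψ.comp iso.symm.toMonoidHom))
  have hφ : Function.Injective φ := by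
    have : Function.Injective (⇑E3 ∘ ⇑E2 ∘ ⇑ψ ∘ ⇑iso.symm) :=
      E3.injective.comp (E2.injective.comp (hψinj.comp iso.symm.injective))
    exact this
  have hkey := key_ineq p e (fun x : Σ ω : Ω, ι ω => q x.1 x.2) (fun x => c x.1 x.2)
    hp he (fun x => hq x.1 x.2) (fun x => hc x.1 x.2) φ hφ
  rw [hm]
  refine le_trans hkey ?_
  rw [← Finset.univ_sigma_univ, Finset.sum_sigma]
  refine Finset.sum_le_sum fun ω _ => ?_
  have hcard : Nat.card (G ⧸ K ω) = ∏ j : ι ω, q ω j ^ c ω j := by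
    rw [Nat.card_congr ((hequiv ω).some).toEquiv, Nat.card_pi]
    refine Finset.prod_congr rfl fun j _ => ?_
    rw [Nat.card_congr Multiplicative.toAdd, Nat.card_zmod]
  rw [hcard]
  refine sum_le_prod' univ _ (fun j _ => ?_)
  calc 2 ≤ q ω j := (hq ω j).two_le
  _ ≤ q ω j ^ c ω j := Nat.le_self_pow (by have := hc ω j; omega) _


theorem upper_bound {G : Type*} [CommGroup G] {n : ℕ} (p e : Fin n → ℕ)
    (hp : ∀ i, (p i).Prime)
    (iso : G ≃* ∀ i : Fin n, Multiplicative (ZMod (p i ^ e i))) :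
    ∃ f : G →* Equiv.Perm (Fin (∑ i, p i ^ e i)), Function.Injective f := by
  haveI : ∀ i, NeZero (p i ^ e i) := fun i => ⟨pow_ne_zero _ (hp i).pos.ne'⟩
  have hcard : Fintype.card (Σ i : Fin n, ZMod (p i ^ e i)) = ∑ i, p i ^ e i := by
    rw [Fintype.card_sigma]
    exact Finset.sum_congr rfl fun i _ => ZMod.card _
  let eFin := Fintype.equivFinOfCardEq hcard
  refine ⟨(Equiv.Perm.viaEmbeddingHom eFin.toEmbedding).comp
    ((transHom (fun i : Fin n => ZMod (p i ^ e i))).comp iso.toMonoidHom), ?_⟩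
  have h1 := Equiv.Perm.viaEmbeddingHom_injective eFin.toEmbedding
  have : Function.Injective (⇑(Equiv.Perm.viaEmbeddingHom eFin.toEmbedding) ∘
      ⇑(transHom (fun i : Fin n => ZMod (p i ^ e i))) ∘ ⇑iso) :=
    h1.comp ((transHom_injective _).comp iso.injective)
  exact this


theorem mu_abelian (G : Type*) [CommGroup G] [Finite G] [Nontrivial G]
    (n : ℕ) (p : Fin n → ℕ) (hp : ∀ i, (p i).Prime)
    (e : Fin n → ℕ) (he : ∀ i, 1 ≤ e i)
    (iso : G ≃* ∀ i : Fin n, Multiplicative (ZMod (p i ^ e i))) :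
    minFaithfulDegree G = ∑ i : Fin n, p i ^ e i := by
  obtain ⟨fU, hfU⟩ := upper_bound p e hp iso
  have hmem : (∑ i : Fin n, p i ^ e i) ∈
      {m : ℕ | ∃ f : G →* Equiv.Perm (Fin m), Function.Injective f} := ⟨fU, hfU⟩
  refine le_antisymm (Nat.sInf_le hmem) (le_csInf ⟨_, hmem⟩ ?_)
  rintro m ⟨f, hf⟩
  exact lower_bound p e hp he iso m f hf
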